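/- Let K be a field and f ∈ K[X] of degree n ≥ 1 with n not divisible by the characteristic of K. Suppose f decomposes over an algebraic closure K̄ of K: there are g, h ∈ K̄[X] with deg g ≥ 2, deg h ≥ 2 and f = g ∘ h in K̄[X]. Then f decomposes over K: there are g′, h′ ∈ K[X] with deg g′ = deg g, deg h′ = deg h and f = g′ ∘ h′. -/

import Mathlib

open Polynomial

/-- Descent of the outer composition factor by repeated division by the monic inner factor. -/
lemma davenport_aux_gdescend {F E : Type*} [Field F] [Field E] (φ : F →+* E)
    (H : F[X]) (hH : H.Monic) (hH1 : 1 ≤ H.natDegree) :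
    ∀ (n : ℕ) (g : E[X]) (P : F[X]), g.natDegree ≤ n →
      P.map φ = g.comp (H.map φ) → ∃ G : F[X], G.map φ = g ∧ G.comp H = P := by
  intro n
  induction n with
  | zero =>
    intro g P hg hP
    obtain ⟨c, rfl⟩ := Polynomial.natDegree_eq_zero.mp (Nat.le_zero.mp hg)
    rw [C_comp] at hP
    have hPdeg : P.natDegree = 0 := by
      rw [← natDegree_map_eq_of_injective φ.injective P, hP, natDegree_C]
    refine ⟨C (P.coeff 0), ?_, by rw [C_comp]; exact (eq_C_of_natDegree_eq_zero hPdeg).symm⟩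
    rw [Polynomial.map_C]
    congr 1
    have := congrArg (fun p => Polynomial.coeff p 0) hP
    simpa using this
  | succ n ih =>
    intro g P hg hP
    rcases le_or_gt g.natDegree n with hle | hlt
    · exact ih g P hle hP
    have hmm : (H.map φ).Monic := hH.map φ
    have hdm : 1 ≤ (H.map φ).natDegree := by
      rwa [natDegree_map_eq_of_injective φ.injective]
    have hdiv : C (g.coeff 0) + (H.map φ) * ((g.divX).comp (H.map φ)) = P.map φ := by
      conv_rhs => rw [hP, ← divX_mul_X_add g]
      rw [add_comp, mul_comp, X_comp, C_comp]
      ring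
    have hdegC : (C (g.coeff 0)).degree < (H.map φ).degree :=
      lt_of_le_of_lt degree_C_le (natDegree_pos_iff_degree_pos.mp hdm)
    obtain ⟨hdivq, hmodr⟩ := div_modByMonic_unique ((g.divX).comp (H.map φ))
      (C (g.coeff 0)) hmm ⟨hdiv, hdegC⟩
    have hQ : (P /ₘ H).map φ = (g.divX).comp (H.map φ) := by
      rw [map_divByMonic φ hH, hdivq]
    have hgdivX : g.divX.natDegree ≤ n := by
      have := natDegree_divX_eq_natDegree_tsub_one (p := g)
      omega
    obtain ⟨G₁, hG₁map, hG₁comp⟩ := ih g.divX (P /ₘ H) hgdivX hQ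
    have hR : (P %ₘ H).map φ = C (g.coeff 0) := by rw [map_modByMonic φ hH, hmodr]
    have hRdeg : (P %ₘ H).natDegree = 0 := by
      rw [← natDegree_map_eq_of_injective φ.injective, hR, natDegree_C]
    have hRc : φ ((P %ₘ H).coeff 0) = g.coeff 0 := by
      have := congrArg (fun p => Polynomial.coeff p 0) hR
      simpa using this
    refine ⟨G₁ * X + C ((P %ₘ H).coeff 0), ?_, ?_⟩
    · rw [Polynomial.map_add, Polynomial.map_mul, Polynomial.map_X, Polynomial.map_C,
        hG₁map, hRc, divX_mul_X_add]
    · rw [add_comp, mul_comp, X_comp, C_comp, hG₁comp, ← eq_C_of_natDegree_eq_zero hRdeg,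
        mul_comm, add_comm]
      exact modByMonic_add_div P H

/-- Key step: with `h` monic and `f.map φ = g.comp h`, if `h = q + r` with `q` defined
over `F` and `1 ≤ deg r < deg h`, then the leading coefficient of `r` (times the
invertible integer `deg g`) lies in the image of `φ`. -/
lemma davenport_aux_step {F E : Type*} [Field F] [Field E] (φ : F →+* E)
    (f : F[X]) (g h : E[X]) (hmono : h.Monic)
    (hm : 2 ≤ g.natDegree) (hcomp : f.map φ = g.comp h)
    (q r : E[X]) (hq : q ∈ lifts φ) (hr : h = q + r) (hrne : r ≠ 0)
    (hd1 : 1 ≤ r.natDegree) (hdk : r.natDegree < h.natDegree) :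
    (g.natDegree : E) * r.leadingCoeff ∈ Set.range φ := by
  set m := g.natDegree with hmdef
  set k := h.natDegree with hkdef
  set d := r.natDegree with hddef
  set N := (m - 1) * k + d with hNdef
  have hg0 : g ≠ 0 := fun h0 => by simp [h0, hmdef] at hm
  set b := g.leadingCoeff with hbdef
  have hb : b ≠ 0 := leadingCoeff_ne_zero.mpr hg0
  have hk2 : 2 ≤ k := by omega
  -- key1 : coefficient of h^m at N from f
  have hu : (C b⁻¹ * g - X ^ m).comp h = C b⁻¹ * (g.comp h) - h ^ m := by
    simp [sub_comp, mul_comp, C_comp, pow_comp, X_comp]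
  have hmon' : (C b⁻¹ * g).Monic := by
    unfold Monic
    rw [leadingCoeff_mul, leadingCoeff_C, ← hbdef, inv_mul_cancel₀ hb]
  have hdeg' : (C b⁻¹ * g).natDegree = m := by rw [natDegree_C_mul (inv_ne_zero hb)]
  have hdu : (C b⁻¹ * g - X ^ m).degree < (m : WithBot ℕ) := by
    have := degree_sub_lt (p := C b⁻¹ * g) (q := X ^ m)
      (by rw [degree_X_pow, degree_eq_natDegree hmon'.ne_zero, hdeg'])
      hmon'.ne_zero (by rw [hmon', monic_X_pow])
    rwa [degree_eq_natDegree hmon'.ne_zero, hdeg'] at this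
  have hund : (C b⁻¹ * g - X ^ m).natDegree ≤ m - 1 := by
    rcases eq_or_ne (C b⁻¹ * g - X ^ m) 0 with h0 | h0
    · simp [h0]
    · have := (degree_eq_natDegree h0) ▸ hdu
      have : (C b⁻¹ * g - X ^ m).natDegree < m := by exact_mod_cast this
      omega
  have hNlt : (C b⁻¹ * g - X ^ m).natDegree * k < N := by
    have h1 : (C b⁻¹ * g - X ^ m).natDegree * k ≤ (m - 1) * k :=
      Nat.mul_le_mul_right k hund
    omega
  have key1 : (h ^ m).coeff N = b⁻¹ * (g.comp h).coeff N := by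
    have h0 : ((C b⁻¹ * g - X ^ m).comp h).coeff N = 0 :=
      coeff_eq_zero_of_natDegree_lt (lt_of_le_of_lt natDegree_comp_le hNlt)
    rw [hu, coeff_sub, coeff_C_mul] at h0
    exact (sub_eq_zero.mp h0).symm
  -- q is monic of degree k
  have hdr : r.degree < h.degree := degree_lt_degree hdk
  have hqe : q = h - r := by rw [hr]; ring
  have hqdeg : q.degree = h.degree := by rw [hqe]; exact degree_sub_eq_left_of_degree_lt hdr
  have hqnd : q.natDegree = k := natDegree_eq_of_degree_eq hqdeg
  have hqmon : q.Monic := by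
    unfold Monic
    have : q = -r + h := by rw [hqe]; ring
    rw [this, leadingCoeff_add_of_degree_lt (by rwa [degree_neg])]
    exact hmono
  -- key2 : binomial expansion
  have hbin : h ^ m = ∑ i ∈ Finset.range (m + 1),
      q ^ i * r ^ (m - i) * (Nat.choose m i : E[X]) := by
    rw [hr]; exact add_pow q r m
  have hterm0 : ∀ i ∈ Finset.range (m - 1),
      (q ^ i * r ^ (m - i) * (Nat.choose m i : E[X])).coeff N = 0 := by
    intro i hi
    have hi' : i < m - 1 := Finset.mem_range.mp hi
    apply coeff_eq_zero_of_natDegree_lt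
    have hb1 : (q ^ i * r ^ (m - i) * (Nat.choose m i : E[X])).natDegree ≤
        i * k + (m - i) * d := by
      refine le_trans natDegree_mul_le ?_
      have : ((Nat.choose m i : ℕ) : E[X]).natDegree = 0 := natDegree_natCast _
      rw [this, add_zero]
      refine le_trans natDegree_mul_le (add_le_add ?_ ?_)
      · exact le_trans natDegree_pow_le (by rw [hqnd])
      · exact le_trans natDegree_pow_le (by rw [← hddef])
    refine lt_of_le_of_lt hb1 ?_
    have e1 : m - i = (m - 1 - i) + 1 := by omega
    have e3 : (m - 1 - i) * d < (m - 1 - i) * k :=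
      Nat.mul_lt_mul_of_pos_left hdk (by omega)
    calc i * k + (m - i) * d = i * k + ((m - 1 - i) * d + d) := by
          rw [e1, add_mul, one_mul]
      _ < i * k + ((m - 1 - i) * k + d) := by
          exact Nat.add_lt_add_left (Nat.add_lt_add_right e3 d) _
      _ = (i + (m - 1 - i)) * k + d := by ring
      _ = (m - 1) * k + d := by congr 2; omega
  have hNd : N = (q ^ (m - 1)).natDegree + r.natDegree := by
    rw [hqmon.natDegree_pow, hqnd]
  have htm1 : (q ^ (m - 1) * r ^ (m - (m - 1)) * (Nat.choose m (m - 1) : E[X])).coeff N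
      = (m : E) * r.leadingCoeff := by
    have hM : m - (m - 1) = 1 := by omega
    have hch : (Nat.choose m (m - 1)) = m := by
      rw [← Nat.choose_symm (by omega : m - 1 ≤ m), hM, Nat.choose_one_right]
    rw [hM, pow_one, hch, show ((m : ℕ) : E[X]) = C ((m : ℕ) : E) by simp, coeff_mul_C,
      hNd, coeff_mul_degree_add_degree, (hqmon.pow (m - 1)).leadingCoeff, one_mul, mul_comm]
  have htm : (q ^ m * r ^ (m - m) * (Nat.choose m m : E[X])).coeff N = (q ^ m).coeff N := by
    rw [Nat.sub_self, pow_zero, mul_one, Nat.choose_self, Nat.cast_one, mul_one]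
  have hcoeffN : (h ^ m).coeff N = (q ^ m).coeff N + (m : E) * r.leadingCoeff := by
    have hsplit : m + 1 = (m - 1) + 1 + 1 := by omega
    have e4 : m - 1 + 1 = m := by omega
    rw [hbin, finset_sum_coeff, hsplit, Finset.sum_range_succ, Finset.sum_range_succ,
      Finset.sum_eq_zero hterm0, zero_add, e4, htm1, htm, add_comm]
  -- assemble
  have hbφ : b = φ f.leadingCoeff := by
    have h1 : (f.map φ).leadingCoeff = φ f.leadingCoeff := leadingCoeff_map_of_injective φ.injective f
    rw [hcomp] at h1
    rw [← h1, leadingCoeff_comp (by omega), hmono.leadingCoeff, one_pow, mul_one]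
  have hfN : (g.comp h).coeff N = φ (f.coeff N) := by
    rw [← hcomp, coeff_map]
  obtain ⟨c, hc⟩ := (lifts_iff_coeff_lifts (q ^ m)).mp (pow_mem hq m) N
  have : (m : E) * r.leadingCoeff = (h ^ m).coeff N - (q ^ m).coeff N := by
    rw [hcoeffN]; ring
  rw [this, key1, hfN, hbφ, ← hc, ← map_inv₀, ← map_mul, ← map_sub]
  exact ⟨_, rfl⟩

/-- Descent of the (normalized) inner composition factor. -/
lemma davenport_aux_hdescend {F E : Type*} [Field F] [Field E] (φ : F →+* E)
    (f : F[X]) (g h : E[X]) (hmono : h.Monic) (h0 : h.coeff 0 = 0)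
    (hm : 2 ≤ g.natDegree) (hk : 1 ≤ h.natDegree)
    (hmE : (g.natDegree : E) ≠ 0) (hcomp : f.map φ = g.comp h) :
    h ∈ lifts φ := by
  set k := h.natDegree with hkdef
  have step : ∀ j : ℕ, 1 ≤ j → j + 1 ≤ k →
      (∃ q ∈ lifts φ, (h - q).degree < (((j + 1 : ℕ) : ℕ) : WithBot ℕ)) →
      ∃ q ∈ lifts φ, (h - q).degree < ((j : ℕ) : WithBot ℕ) := by
    rintro j hj1 hjk ⟨q, hq, hdeg⟩
    rcases lt_or_ge (h - q).degree ((j : ℕ) : WithBot ℕ) with hlt | hge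
    · exact ⟨q, hq, hlt⟩
    have hne : h - q ≠ 0 := by
      intro hz
      rw [hz, degree_zero] at hge
      exact (not_lt.mpr hge) (bot_lt_iff_ne_bot.mpr (by simp))
    have hndj : (h - q).natDegree = j := by
      have hdd := degree_eq_natDegree hne
      rw [hdd] at hdeg hge
      have h1 : j ≤ (h - q).natDegree := by exact_mod_cast hge
      have h2 : (h - q).natDegree < j + 1 := by exact_mod_cast hdeg
      omega
    have hlc := davenport_aux_step φ f g h hmono hm hcomp q (h - q) hq (by ring) hne
      (by omega) (by rw [hndj]; omega)
    have hlcr : (h - q).leadingCoeff ∈ Set.range φ := by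
      obtain ⟨c, hc⟩ := hlc
      have hmF : ((g.natDegree : ℕ) : F) ≠ 0 := by
        intro hz
        apply hmE
        rw [← map_natCast φ g.natDegree, hz, map_zero]
      refine ⟨((g.natDegree : ℕ) : F)⁻¹ * c, ?_⟩
      rw [map_mul, map_inv₀, hc, map_natCast]
      field_simp
    obtain ⟨a, ha⟩ := hlcr
    refine ⟨q + C (φ a) * X ^ j, add_mem hq (mul_mem (C_mem_lifts φ a) (X_pow_mem_lifts φ j)), ?_⟩
    have he : h - (q + C (φ a) * X ^ j) = (h - q).eraseLead := by
      rw [← self_sub_C_mul_X_pow, hndj, ha]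
      ring
    rw [he]
    calc (h - q).eraseLead.degree < (h - q).degree := degree_eraseLead_lt hne
      _ = ((j : ℕ) : WithBot ℕ) := by rw [degree_eq_natDegree hne, hndj]
  have base : ∃ q ∈ lifts φ, (h - q).degree < ((k : ℕ) : WithBot ℕ) := by
    refine ⟨X ^ k, X_pow_mem_lifts φ k, ?_⟩
    have := degree_sub_lt (p := h) (q := X ^ k)
      (by rw [degree_X_pow, degree_eq_natDegree hmono.ne_zero])
      hmono.ne_zero (by rw [hmono.leadingCoeff, monic_X_pow])
    rwa [degree_eq_natDegree hmono.ne_zero] at this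
  have main : ∀ t : ℕ, 1 ≤ k - t → ∃ q ∈ lifts φ, (h - q).degree < ((k - t : ℕ) : WithBot ℕ) := by
    intro t
    induction t with
    | zero => intro _; simpa using base
    | succ t ih =>
      intro h1
      have h2 : 1 ≤ k - t := by omega
      have e : k - t = (k - (t + 1)) + 1 := by omega
      exact step (k - (t + 1)) h1 (by omega) (by rw [← e]; exact ih h2)
  obtain ⟨q, hq, hdeg⟩ := main (k - 1) (by omega)
  have e : k - (k - 1) = 1 := by omega
  rw [e] at hdeg
  have hC : h - q = C ((h - q).coeff 0) :=
    eq_C_of_degree_le_zero (Nat.WithBot.lt_one_iff_le_zero.mp (by exact_mod_cast hdeg))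
  have hc0 : (h - q).coeff 0 = -q.coeff 0 := by rw [coeff_sub, h0, zero_sub]
  rw [hc0] at hC
  obtain ⟨a, ha⟩ := (lifts_iff_coeff_lifts q).mp hq 0
  have hh : h = C (-(q.coeff 0)) + q := sub_eq_iff_eq_add.mp hC
  rw [hh, ← ha, ← map_neg]
  exact add_mem (C_mem_lifts φ (-a)) hq

/-- **Lemma 3.4, first part (Polynomial Primitivity, [FrM69, Prop. 3.2]).**  A polynomial
`f ∈ K[X]` of degree `n ≥ 1` prime to the characteristic that decomposes over the
algebraic closure of `K` already decomposes over `K`, with composition factors of the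
same degrees. -/
theorem davenport_decompDescends
    {K : Type*} [Field K] (f : Polynomial K) (hdeg : 1 ≤ f.natDegree)
    (hchar : ¬ (ringChar K ∣ f.natDegree))
    (g h : Polynomial (AlgebraicClosure K))
    (hg : 2 ≤ g.natDegree) (hh : 2 ≤ h.natDegree)
    (hcomp : f.map (algebraMap K (AlgebraicClosure K)) = g.comp h) :
    ∃ g' h' : Polynomial K,
      g'.natDegree = g.natDegree ∧ h'.natDegree = h.natDegree ∧ f = g'.comp h' := by
  set φ := algebraMap K (AlgebraicClosure K) with hφdef
  have hφ : Function.Injective φ := φ.injective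
  have hne : h ≠ 0 := fun h0 => by simp [h0] at hh
  set c := h.leadingCoeff with hcdef
  have hc : c ≠ 0 := leadingCoeff_ne_zero.mpr hne
  set a := h.coeff 0 with hadef
  set h₁ := C c⁻¹ * (h - C a) with hh1def
  have hdCa : (C a).degree < h.degree := lt_of_le_of_lt degree_C_le
    (natDegree_pos_iff_degree_pos.mp (by omega))
  have hsub_deg : (h - C a).degree = h.degree := degree_sub_eq_left_of_degree_lt hdCa
  have hsub_nd : (h - C a).natDegree = h.natDegree := natDegree_eq_of_degree_eq hsub_deg
  have hsub_lc : (h - C a).leadingCoeff = c := by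
    have he : h - C a = -C a + h := by ring
    rw [he, leadingCoeff_add_of_degree_lt (by rwa [degree_neg])]
  have h1nd : h₁.natDegree = h.natDegree := by
    rw [hh1def, natDegree_C_mul (inv_ne_zero hc), hsub_nd]
  have h1mon : h₁.Monic := by
    unfold Monic
    rw [hh1def, leadingCoeff_mul, leadingCoeff_C, hsub_lc, inv_mul_cancel₀ hc]
  have h10 : h₁.coeff 0 = 0 := by
    rw [hh1def, coeff_C_mul, coeff_sub, coeff_C_zero]
    simp [hadef]
  set L := C c * X + C a with hLdef
  set g₁ := g.comp L with hg1def
  have hLnd : L.natDegree = 1 := natDegree_linear hc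
  have g1nd : g₁.natDegree = g.natDegree := by
    rw [hg1def, natDegree_comp, hLnd, mul_one]
  have hLh1 : L.comp h₁ = h := by
    rw [hLdef, hh1def]
    simp only [add_comp, mul_comp, C_comp, X_comp]
    rw [← mul_assoc, ← C_mul, mul_inv_cancel₀ hc, C_1, one_mul, sub_add_cancel]
  have hcomp1 : f.map φ = g₁.comp h₁ := by
    rw [hcomp, hg1def, comp_assoc, hLh1]
  have hn : f.natDegree = g.natDegree * h.natDegree := by
    rw [← natDegree_map_eq_of_injective hφ f, hcomp, natDegree_comp]
  have hmK : ((g.natDegree : ℕ) : K) ≠ 0 := by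
    intro hz
    have hd := (CharP.cast_eq_zero_iff K (ringChar K) g.natDegree).mp hz
    exact hchar (by rw [hn]; exact hd.mul_right _)
  have hmE : ((g.natDegree : ℕ) : AlgebraicClosure K) ≠ 0 := by
    rw [← map_natCast φ g.natDegree]
    exact fun hz => hmK (hφ (by rw [hz, map_zero]))
  have hlift := davenport_aux_hdescend φ f g₁ h₁ h1mon h10
    (by rw [g1nd]; exact hg) (by omega) (by rw [g1nd]; exact hmE) hcomp1
  obtain ⟨H, hH⟩ := (mem_lifts h₁).mp hlift
  have hHnd : H.natDegree = h.natDegree := by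
    rw [← h1nd, ← hH, natDegree_map_eq_of_injective hφ]
  have hHmon : H.Monic := by
    have h1 : φ H.leadingCoeff = 1 := by
      rw [← leadingCoeff_map_of_injective hφ H, hH]; exact h1mon
    exact hφ (by rw [h1, map_one])
  obtain ⟨G, hGmap, hGcomp⟩ := davenport_aux_gdescend φ H hHmon (by omega)
    g₁.natDegree g₁ f le_rfl (by rw [hH]; exact hcomp1)
  exact ⟨G, H, by rw [← g1nd, ← hGmap, natDegree_map_eq_of_injective hφ], hHnd, hGcomp.symm⟩
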